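/- For every d ∈ (0,1), the WENO-M mapping function is monotonically non-decreasing on [0,1]: for all 0 ≤ ω₁ ≤ ω₂ ≤ 1, g(ω₁) ≤ g(ω₂). -/

import Mathlib

/-- The WENO-M mapping function of Henrick et al. -/
noncomputable def gM (d ω : ℝ) : ℝ :=
  ω * (d + d ^ 2 - 3 * d * ω + ω ^ 2) / (d ^ 2 + (1 - 2 * d) * ω)

/-- For every `d ∈ (0,1)`, the WENO-M mapping function is monotonically non-decreasing
on `[0,1]`: for all `0 ≤ ω₁ ≤ ω₂ ≤ 1`, `g(ω₁) ≤ g(ω₂)`. -/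
theorem wenoM_monotone (d : ℝ) (hd : d ∈ Set.Ioo (0 : ℝ) 1) :
    MonotoneOn (gM d) (Set.Icc (0 : ℝ) 1) := by
  obtain ⟨hd0, hd1⟩ := hd
  have hD : ∀ x : ℝ, 0 ≤ x → x ≤ 1 → (0:ℝ) < d ^ 2 + (1 - 2 * d) * x := by
    intro x hx0 hx1
    rcases le_or_gt d (1/2) with h | h
    · nlinarith [mul_nonneg (by linarith : (0:ℝ) ≤ 1 - 2*d) hx0, mul_pos hd0 hd0]
    · nlinarith [mul_nonneg (by linarith : (0:ℝ) ≤ 2*d - 1) (by linarith : (0:ℝ) ≤ 1 - x),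
        mul_pos (by linarith : (0:ℝ) < 1 - d) (by linarith : (0:ℝ) < 1 - d)]
  -- derivative of gM at any point x in [0,1]
  have hderiv : ∀ x : ℝ, 0 ≤ x → x ≤ 1 → HasDerivAt (gM d)
      (((d + d^2 - 6*d*x + 3*x^2) * (d^2 + (1-2*d)*x)
        - (x*(d + d^2 - 3*d*x + x^2)) * (1 - 2*d)) / (d^2 + (1-2*d)*x)^2) x := by
    intro x hx0 hx1
    have hN : HasDerivAt (fun y : ℝ => y * (d + d ^ 2 - 3 * d * y + y ^ 2))
        (d + d^2 - 6*d*x + 3*x^2) x := by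
      have h1 : HasDerivAt (fun y : ℝ => y) 1 x := hasDerivAt_id x
      have h2 : HasDerivAt (fun y : ℝ => d + d ^ 2 - 3 * d * y + y ^ 2)
          (-(3*d) + 2*x) x := by
        have hc : HasDerivAt (fun y : ℝ => y ^ 2) (2*x) x := by
          simpa using hasDerivAt_pow 2 x
        have hb : HasDerivAt (fun y : ℝ => 3 * d * y) (3*d) x := by
          simpa using (hasDerivAt_id x).const_mul (3*d)
        have ha : HasDerivAt (fun y : ℝ => d + d ^ 2 - 3 * d * y) (-(3*d)) x := by
          exact hb.const_sub (d + d^2)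
        exact ha.add hc
      have := h1.mul h2
      exact this.congr_deriv (by ring)
    have hDd : HasDerivAt (fun y : ℝ => d ^ 2 + (1 - 2 * d) * y) (1 - 2*d) x := by
      exact (((hasDerivAt_id x).const_mul (1-2*d)).const_add (d^2)).congr_deriv (by ring)
    exact hN.div hDd (ne_of_gt (hD x hx0 hx1))
  apply monotoneOn_of_deriv_nonneg (convex_Icc 0 1)
  · -- continuity
    apply ContinuousOn.div
    · fun_prop
    · fun_prop
    · intro x hx
      exact ne_of_gt (hD x hx.1 hx.2)
  · intro x hx
    rw [interior_Icc] at hx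
    exact ((hderiv x hx.1.le hx.2.le).differentiableAt).differentiableWithinAt
  · intro x hx
    rw [interior_Icc] at hx
    obtain ⟨hx0, hx1⟩ := hx
    rw [(hderiv x hx0.le hx1.le).deriv]
    apply div_nonneg _ (sq_nonneg _)
    have key : (d + d^2 - 6*d*x + 3*x^2) * (d^2 + (1-2*d)*x)
        - (x*(d + d^2 - 3*d*x + x^2)) * (1 - 2*d)
        = (x - d)^2 * ((2 - 4*d)*x + d + d^2) := by ring
    rw [key]
    apply mul_nonneg (sq_nonneg _)
    have h1 : (0:ℝ) ≤ x * ((1-d)*(2-d)) :=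
      mul_nonneg hx0.le (mul_nonneg (by linarith) (by linarith))
    have h2 : (0:ℝ) ≤ (1-x) * (d + d^2) :=
      mul_nonneg (by linarith) (by nlinarith)
    nlinarith [h1, h2]
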